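/- Consider the group G presented with generators s_i and z_i for i ∈ ℕ, and relators: s_0; the commutators s_i z_i s_i^{-1} z_i^{-1}; the words (s_i^{-1} z_{i+1} s_i)(z_i^{-1} z_{i+1}^{-1} z_i^2)^{-1}; and the words s_{i+1}^{-1} s_i^2 z_i^3 z_{i+1}^{-6}, for all i ∈ ℕ. Then the abelianization of G is isomorphic to the additive group of dyadic rationals { p/2^k : p ∈ ℤ, k ∈ ℕ } ⊆ ℚ. -/

import Mathlib

/-- The generator s_i of the free group on the generators s_i, z_i (i ∈ ℕ). -/
def s (i : ℕ) : FreeGroup (ℕ ⊕ ℕ) := FreeGroup.of (Sum.inl i)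

/-- The generator z_i of the free group on the generators s_i, z_i (i ∈ ℕ). -/
def z (i : ℕ) : FreeGroup (ℕ ⊕ ℕ) := FreeGroup.of (Sum.inr i)

/-- Relators for the dyadic solenoid embedded with a trefoil braid at each level: s_0;
[s_i, z_i]; s_i⁻¹ z_{i+1} s_i = z_i⁻¹ z_{i+1}⁻¹ z_i²; and s_{i+1} = s_i² z_i³ z_{i+1}⁻⁶. -/
def trefoilRels : Set (FreeGroup (ℕ ⊕ ℕ)) :=
  {s 0} ∪
    {r | ∃ i : ℕ,
      r = s i * z i * (s i)⁻¹ * (z i)⁻¹ ∨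
      r = ((s i)⁻¹ * z (i + 1) * s i) * ((z i)⁻¹ * (z (i + 1))⁻¹ * (z i) ^ 2)⁻¹ ∨
      r = (s (i + 1))⁻¹ * (s i) ^ 2 * (z i) ^ 3 * (z (i + 1)) ^ (-6 : ℤ)}

/-- The set of dyadic rationals p / 2^k. -/
def dyadicSet : Set ℚ := {x | ∃ (p : ℤ) (k : ℕ), x = (p : ℚ) / 2 ^ k}

namespace TrefoilAux

lemma comm_lemma_2 {G : Type*} [CommGroup G] (x y u : G)
    (h : u⁻¹ * y * u * (x⁻¹ * y⁻¹ * x ^ 2)⁻¹ = 1) : x = y ^ 2 := by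
  have h2 : u⁻¹ * y * u = x⁻¹ * y⁻¹ * x ^ 2 := by rwa [mul_inv_eq_one] at h
  have h4 : y * y = y * (x⁻¹ * y⁻¹ * x ^ 2) := by
    rw [← h2]; simp [mul_comm, mul_left_comm]
  rw [show y * (x⁻¹ * y⁻¹ * x ^ 2) = x from by
    simp [pow_two, mul_comm, mul_left_comm, mul_assoc]] at h4
  rw [← h4, pow_two]

lemma comm_lemma_3 {G : Type*} [CommGroup G] (x y u v : G)
    (h : v⁻¹ * u ^ 2 * x ^ 3 * y ^ (-6 : ℤ) = 1) (hxy : x = y ^ 2) : v = u ^ 2 := by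
  subst hxy
  have : v⁻¹ * u ^ 2 = 1 := by
    rw [← h]; group
  rw [inv_mul_eq_one] at this; exact this

abbrev AbG := Abelianization (PresentedGroup trefoilRels)

/-- The image of z_k in the abelianization. -/
def a (k : ℕ) : AbG := Abelianization.of (PresentedGroup.of (Sum.inr k))

/-- The image of s_i in the abelianization. -/
def b (i : ℕ) : AbG := Abelianization.of (PresentedGroup.of (Sum.inl i))

def π : FreeGroup (ℕ ⊕ ℕ) →* AbG :=
  (Abelianization.of).comp (PresentedGroup.mk trefoilRels)

lemma rel_one {r : FreeGroup (ℕ ⊕ ℕ)} (hr : r ∈ trefoilRels) : π r = 1 := by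
  have : PresentedGroup.mk trefoilRels r = 1 :=
    (QuotientGroup.eq_one_iff r).mpr (Subgroup.subset_normalClosure hr)
  simp [π, this]

lemma π_s (i : ℕ) : π (s i) = b i := rfl
lemma π_z (i : ℕ) : π (z i) = a i := rfl

lemma ha (i : ℕ) : a i = a (i + 1) ^ 2 := by
  have h := rel_one (Or.inr ⟨i, Or.inr (Or.inl rfl)⟩)
  simp only [map_mul, map_inv, map_pow, π_s, π_z] at h
  exact comm_lemma_2 _ _ _ h

lemma hb : ∀ i, b i = 1 := by
  intro i
  induction i with
  | zero =>
    have h := rel_one (Or.inl rfl)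
    rwa [π_s] at h
  | succ n ih =>
    have h := rel_one (Or.inr ⟨n, Or.inr (Or.inr rfl)⟩)
    simp only [map_mul, map_inv, map_pow, map_zpow, π_s, π_z] at h
    rw [comm_lemma_3 _ _ _ _ h (ha n), ih, one_pow]

lemma han (k n : ℕ) : a k = a (k + n) ^ (2 ^ n : ℕ) := by
  induction n with
  | zero => simp
  | succ n ih =>
    rw [ih, ha (k + n), ← pow_mul, show k + n + 1 = k + (n + 1) from rfl,
      pow_succ, Nat.mul_comm]

lemma key (p q : ℤ) (k m : ℕ) (h : (p : ℚ) / 2 ^ k = (q : ℚ) / 2 ^ m) :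
    a k ^ p = a m ^ q := by
  have h2 : (p : ℚ) * 2 ^ m = (q : ℚ) * 2 ^ k := by
    field_simp at h
    linarith
  have h3 : p * 2 ^ m = q * 2 ^ k := by exact_mod_cast h2
  have e1 : a k ^ p = a (k + m) ^ (p * 2 ^ m) := by
    rw [han k m, ← zpow_natCast (a (k + m)) (2 ^ m), ← zpow_mul, mul_comm]
    norm_cast
  have e2 : a m ^ q = a (k + m) ^ (q * 2 ^ k) := by
    rw [han m k, ← zpow_natCast (a (m + k)) (2 ^ k), ← zpow_mul, mul_comm,
      Nat.add_comm m k]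
    norm_cast
  rw [e1, e2, h3]

/-- Killing the relators in any commutative group with a ½-divisible family. -/
lemma lift_rels {M : Type*} [CommGroup M] (m : ℕ → M) (hm : ∀ k, m k = m (k + 1) ^ 2) :
    ∀ r ∈ trefoilRels, FreeGroup.lift (Sum.elim (fun _ => (1 : M)) m) r = 1 := by
  rintro r (rfl | ⟨i, rfl | rfl | rfl⟩) <;>
    simp only [s, z, map_mul, map_inv, map_pow, map_zpow, FreeGroup.lift_apply_of,
      Sum.elim_inl, Sum.elim_inr]
  · group
  · rw [hm i]; group
  · rw [hm i]; group

end TrefoilAux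

open TrefoilAux in
/-- The abelianization of the presented group of the trefoil-embedded dyadic solenoid
complement is isomorphic to the additive group of dyadic rationals (viewed
multiplicatively). -/
theorem abelianization_trefoil_dyadic (H : AddSubgroup ℚ) (hH : (H : Set ℚ) = dyadicSet) :
    Nonempty (Abelianization (PresentedGroup trefoilRels) ≃* Multiplicative H) := by
  classical
  have hmem : ∀ (p : ℤ) (k : ℕ), ((p : ℚ) / 2 ^ k) ∈ H := by
    intro p k
    have : ((p : ℚ) / 2 ^ k) ∈ dyadicSet := ⟨p, k, rfl⟩
    rwa [← hH] at this
  -- the target family of elements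
  set m : ℕ → Multiplicative H := fun k =>
    Multiplicative.ofAdd (⟨(1 : ℚ) / 2 ^ k, by simpa using hmem 1 k⟩ : H) with hm_def
  have hm : ∀ k, m k = m (k + 1) ^ 2 := by
    intro k
    simp only [hm_def, pow_two, ← ofAdd_add]
    congr 1
    apply Subtype.ext
    push_cast
    rw [pow_succ]
    ring
  -- forward homomorphism
  have hf := lift_rels m hm
  set Φ : AbG →* Multiplicative H :=
    Abelianization.lift (PresentedGroup.toGroup hf) with hΦ_def
  have hΦa : ∀ k, Φ (a k) = m k := fun k => by
    simp [hΦ_def, a, Abelianization.lift_apply_of, PresentedGroup.toGroup.of]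
  have hΦb : ∀ i, Φ (b i) = 1 := fun i => by
    simp [hΦ_def, b, Abelianization.lift_apply_of, PresentedGroup.toGroup.of]
  -- representation of dyadic elements
  have ex : ∀ x : Multiplicative H, ∃ pk : ℤ × ℕ,
      ((Multiplicative.toAdd x : H) : ℚ) = (pk.1 : ℚ) / 2 ^ pk.2 := by
    intro x
    have hx : ((Multiplicative.toAdd x : H) : ℚ) ∈ dyadicSet := by
      rw [← hH]; exact (Multiplicative.toAdd x : H).2
    obtain ⟨p, k, h⟩ := hx
    exact ⟨(p, k), h⟩
  let ψf : Multiplicative H → AbG := fun x => a (ex x).choose.2 ^ (ex x).choose.1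
  have ψ_eq : ∀ (x : Multiplicative H) (p : ℤ) (k : ℕ),
      ((Multiplicative.toAdd x : H) : ℚ) = (p : ℚ) / 2 ^ k → ψf x = a k ^ p := by
    intro x p k hx
    exact key _ _ _ _ (by rw [← (ex x).choose_spec, hx])
  have ψ_one : ψf 1 = 1 := by
    rw [ψ_eq 1 0 0 (by norm_num), zpow_zero]
  have ψ_mul : ∀ x y : Multiplicative H, ψf (x * y) = ψf x * ψf y := by
    intro x y
    obtain ⟨⟨p, k⟩, hx⟩ := ex x
    obtain ⟨⟨q, n⟩, hy⟩ := ex y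
    have hxy : ((Multiplicative.toAdd (x * y) : H) : ℚ) =
        ((p * 2 ^ n + q * 2 ^ k : ℤ) : ℚ) / 2 ^ (k + n) := by
      have : ((Multiplicative.toAdd (x * y) : H) : ℚ) =
          ((Multiplicative.toAdd x : H) : ℚ) + ((Multiplicative.toAdd y : H) : ℚ) := by
        norm_cast
      rw [this, hx, hy]
      push_cast
      rw [pow_add]
      field_simp
    rw [ψ_eq _ _ _ hxy, ψ_eq x p k hx, ψ_eq y q n hy]
    have e1 : a k ^ p = a (k + n) ^ (p * 2 ^ n) :=
      key _ _ _ _ (by push_cast; rw [pow_add]; field_simp; all_goals ring)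
    have e2 : a n ^ q = a (k + n) ^ (q * 2 ^ k) :=
      key _ _ _ _ (by push_cast; rw [pow_add]; field_simp; all_goals ring)
    rw [e1, e2, ← zpow_add]
  set ψ : Multiplicative H →* AbG :=
    { toFun := ψf, map_one' := ψ_one, map_mul' := ψ_mul } with hψ_def
  have hψm : ∀ k, ψ (m k) = a k := by
    intro k
    have : ((Multiplicative.toAdd (m k) : H) : ℚ) = ((1 : ℤ) : ℚ) / 2 ^ k := by
      simp [hm_def]
    show ψf (m k) = a k
    rw [ψ_eq _ _ _ this, zpow_one]
  have hleft : ψ.comp Φ = MonoidHom.id AbG := by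
    apply Abelianization.hom_ext
    apply PresentedGroup.ext
    rintro (i | k)
    · show ψ (Φ (b i)) = b i
      rw [hΦb, map_one, hb]
    · show ψ (Φ (a k)) = a k
      rw [hΦa, hψm]
  have hright : Φ.comp ψ = MonoidHom.id (Multiplicative H) := by
    refine MonoidHom.ext fun x => ?_
    obtain ⟨⟨p, k⟩, hx⟩ := ex x
    show Φ (ψf x) = x
    rw [ψ_eq x p k hx, map_zpow, hΦa]
    have : m k ^ p = Multiplicative.ofAdd (p • (⟨(1 : ℚ) / 2 ^ k, by simpa using hmem 1 k⟩ : H)) := by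
      simp [hm_def, ← ofAdd_zsmul]
    rw [this]
    have : Multiplicative.toAdd x = p • (⟨(1 : ℚ) / 2 ^ k, by simpa using hmem 1 k⟩ : H) := by
      apply Subtype.ext
      push_cast [zsmul_eq_mul]
      rw [hx]
      ring
    rw [← this]
    rfl
  exact ⟨MonoidHom.toMulEquiv Φ ψ hleft hright⟩
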